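/- arXiv:1907.06050 — 2 statements merged into one kernel-verified Lean document; each statement's English description precedes it below -/
import Mathlib

section
/- Let α ≥ 1 and β ≥ 0 be real numbers and let m be an integer with m > α + β - 1. Then m belongs to the inhomogeneous Beatty set B(α, β) = {⌊nα + β⌋ : n ∈ ℕ, n ≥ 1} if and only if (m - β)/α mod 1 lies in (-1/α, 0] mod 1. -/
/-- Inhomogeneous Beatty membership criterion: for `α ≥ 1`, `β ≥ 0` and an integer
`m > α + β - 1`, `m ∈ B(α,β) = {⌊nα + β⌋ : n ≥ 1}` iff `(m-β)/α ∈ (-1/α, 0] (mod 1)`. -/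
theorem inhomogeneous_beatty_membership (α β : ℝ) (hα : 1 ≤ α) (hβ : 0 ≤ β)
    (m : ℤ) (hm : (m : ℝ) > α + β - 1) :
    (∃ n : ℕ, 1 ≤ n ∧ m = ⌊(n : ℝ) * α + β⌋) ↔
      ∃ k : ℤ, -1 / α < ((m : ℝ) - β) / α - (k : ℝ) ∧ ((m : ℝ) - β) / α - (k : ℝ) ≤ 0 := by
  have hα0 : (0:ℝ) < α := lt_of_lt_of_le one_pos hα
  constructor
  · rintro ⟨n, hn1, hn⟩
    have h1 : (m:ℝ) ≤ (n:ℝ) * α + β := by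
      rw [hn]; exact Int.floor_le _
    have h2 : (n:ℝ) * α + β < (m:ℝ) + 1 := by
      rw [hn]; exact Int.lt_floor_add_one _
    refine ⟨(n : ℤ), ?_, ?_⟩
    · push_cast
      rw [div_lt_iff₀ hα0] at *
      have : ((m:ℝ) - β) / α * α = (m:ℝ) - β := div_mul_cancel₀ _ (ne_of_gt hα0)
      nlinarith [this]
    · push_cast
      rw [sub_nonpos, div_le_iff₀ hα0]
      linarith
  · rintro ⟨k, hk1, hk2⟩
    have hle : (m:ℝ) - β ≤ (k:ℝ) * α := by
      rw [sub_nonpos, div_le_iff₀ hα0] at hk2; linarith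
    have hlt : (k:ℝ) * α < (m:ℝ) - β + 1 := by
      have h := hk1
      rw [div_lt_iff₀ hα0] at h
      have : ((m:ℝ) - β) / α * α = (m:ℝ) - β := div_mul_cancel₀ _ (ne_of_gt hα0)
      nlinarith
    have hk0 : (0:ℝ) < (k:ℝ) := by
      have h1 : (m:ℝ) - β > α - 1 := by linarith
      have h2 : (k:ℝ) * α > α - 1 := by linarith
      nlinarith
    have hk1' : 1 ≤ k := by exact_mod_cast (by exact_mod_cast hk0 : (0:ℤ) < k)
    refine ⟨k.toNat, ?_, ?_⟩
    · omega
    · have hcast : ((k.toNat : ℕ) : ℝ) = (k:ℝ) := by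
        have := Int.toNat_of_nonneg (le_of_lt (by exact_mod_cast hk0 : (0:ℤ) < k))
        exact_mod_cast congrArg (Int.cast : ℤ → ℝ) this
      rw [hcast]
      symm
      rw [Int.floor_eq_iff]
      constructor <;> push_cast <;> linarith
end

section
/- Let λ ∈ (0,1) be irrational and let ψ(t) = t - ⌊t⌋ - 1/2. Then (1/x) · Σ_{1 ≤ m ≤ x} (ψ(mλ) - ψ((m+1)λ))² converges to λ(1 - λ) as x → ∞. -/
open Filter

private lemma saw_floor_div_tendsto (l : ℝ) :
    Tendsto (fun x : ℕ => (⌊((x : ℝ) + 1) * l⌋ : ℝ) / x) atTop (nhds l) := by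
  have h0 : Tendsto (fun x : ℕ => 1 / (x : ℝ)) atTop (nhds 0) :=
    tendsto_one_div_atTop_nhds_zero_nat
  have hc : Tendsto (fun _ : ℕ => l) atTop (nhds l) := tendsto_const_nhds
  have hlow : Tendsto (fun x : ℕ => l + l * (1 / (x : ℝ)) - 1 / (x : ℝ)) atTop (nhds l) := by
    have := (hc.add (h0.const_mul l)).sub h0
    simpa using this
  have hup : Tendsto (fun x : ℕ => l + l * (1 / (x : ℝ))) atTop (nhds l) := by
    simpa using hc.add (h0.const_mul l)
  refine tendsto_of_tendsto_of_tendsto_of_le_of_le' hlow hup ?_ ?_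
  · filter_upwards [eventually_ge_atTop 1] with x hx
    have hx' : (0 : ℝ) < x := by exact_mod_cast hx
    have h := Int.sub_one_lt_floor (((x : ℝ) + 1) * l)
    have e1 : l + l * (1 / (x : ℝ)) - 1 / (x : ℝ) = (((x : ℝ) + 1) * l - 1) / x := by
      field_simp
    rw [e1, div_le_div_iff_of_pos_right hx']
    linarith
  · filter_upwards [eventually_ge_atTop 1] with x hx
    have hx' : (0 : ℝ) < x := by exact_mod_cast hx
    have h := Int.floor_le (((x : ℝ) + 1) * l)
    have e1 : l + l * (1 / (x : ℝ)) = ((x : ℝ) + 1) * l / x := by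
      field_simp
    rw [e1, div_le_div_iff_of_pos_right hx']
    linarith

open Filter in
/-- For irrational `λ ∈ (0,1)`, the average `(1/x) Σ_{1 ≤ m ≤ x} (ψ(mλ) - ψ((m+1)λ))²`
converges to `λ(1-λ)`, where `ψ(t) = t - ⌊t⌋ - 1/2`. -/
theorem sawtooth_variance_limit (l : ℝ) (h0 : 0 < l) (h1 : l < 1) (hirr : Irrational l) :
    Tendsto (fun x : ℕ =>
        (1 / (x : ℝ)) * ∑ m ∈ Finset.Icc 1 x,
          (((m : ℝ) * l - ⌊(m : ℝ) * l⌋ - 1 / 2)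
            - (((m : ℝ) + 1) * l - ⌊((m : ℝ) + 1) * l⌋ - 1 / 2)) ^ 2)
      atTop (nhds (l * (1 - l))) := by
  have key : ∀ m : ℕ,
      (((m : ℝ) * l - ⌊(m : ℝ) * l⌋ - 1 / 2)
        - (((m : ℝ) + 1) * l - ⌊((m : ℝ) + 1) * l⌋ - 1 / 2)) ^ 2
      = l ^ 2 + (1 - 2 * l) * ((⌊((m : ℝ) + 1) * l⌋ : ℝ) - (⌊(m : ℝ) * l⌋ : ℝ)) := by
    intro m
    set a := ⌊(m : ℝ) * l⌋ with ha
    set b := ⌊((m : ℝ) + 1) * l⌋ with hb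
    have h1' : a ≤ b := Int.floor_mono (by nlinarith)
    have h2' : b ≤ a + 1 := by
      have hlt : ((m : ℝ) + 1) * l ≤ (m : ℝ) * l + 1 := by nlinarith
      have := Int.floor_mono hlt
      rwa [Int.floor_add_one] at this
    have hab : b = a ∨ b = a + 1 := by omega
    rcases hab with h | h
    · rw [h]; push_cast; ring
    · rw [h]; push_cast; ring
  have sum_eq : ∀ x : ℕ,
      ∑ m ∈ Finset.Icc 1 x,
          (((m : ℝ) * l - ⌊(m : ℝ) * l⌋ - 1 / 2)
            - (((m : ℝ) + 1) * l - ⌊((m : ℝ) + 1) * l⌋ - 1 / 2)) ^ 2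
      = (x : ℝ) * l ^ 2 + (1 - 2 * l) * (⌊((x : ℝ) + 1) * l⌋ : ℝ) := by
    intro x
    induction x with
    | zero =>
      have hfl : ⌊((0 : ℝ) + 1) * l⌋ = 0 := by
        rw [show ((0 : ℝ) + 1) * l = l by ring]
        exact Int.floor_eq_zero_iff.mpr ⟨h0.le, h1⟩
      norm_num [hfl]
      exact Or.inr ⟨h0.le, h1⟩
    | succ n ih =>
      rw [Finset.sum_Icc_succ_top (by omega), ih, key (n + 1)]
      push_cast
      ring
  have heq : ∀ᶠ x : ℕ in atTop,
      (1 / (x : ℝ)) * ∑ m ∈ Finset.Icc 1 x,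
          (((m : ℝ) * l - ⌊(m : ℝ) * l⌋ - 1 / 2)
            - (((m : ℝ) + 1) * l - ⌊((m : ℝ) + 1) * l⌋ - 1 / 2)) ^ 2
      = l ^ 2 + (1 - 2 * l) * ((⌊((x : ℝ) + 1) * l⌋ : ℝ) / x) := by
    filter_upwards [eventually_ge_atTop 1] with x hx
    have hx' : (x : ℝ) ≠ 0 := by exact Nat.cast_ne_zero.mpr (by omega)
    rw [sum_eq x]
    field_simp
  have hmain : Tendsto (fun x : ℕ => l ^ 2 + (1 - 2 * l) * ((⌊((x : ℝ) + 1) * l⌋ : ℝ) / x))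
      atTop (nhds (l ^ 2 + (1 - 2 * l) * l)) :=
    tendsto_const_nhds.add ((saw_floor_div_tendsto l).const_mul _)
  have : l * (1 - l) = l ^ 2 + (1 - 2 * l) * l := by ring
  rw [this]
  refine Tendsto.congr' ?_ hmain
  filter_upwards [heq] with x hx
  exact hx.symm
end
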